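/- Let q, h, a : ℝ → ℝ³ be a smooth Frenet frame of a timelike ruled surface of type M₊¹ (⟨q,q⟩ = 1, ⟨h,h⟩ = -1, ⟨a,a⟩ = 1) with Frenet equations q' = σ h, h' = σ q + σκ a, a' = σκ h. Let c satisfy c' = q and let R be constant. Define c* = c + R a and q* = cos θ · q + sin θ · h. If sin θ - Rκσ cos θ = 0 with cos θ ≠ 0, then (c*)' is proportional to q* (so the Mannheim offset of type M₊² is developable). -/

import Mathlib

/-- Minkowski inner product on ℝ³: ⟨x,y⟩ = -x₁y₁ + x₂y₂ + x₃y₃. -/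
def mdot (x y : Fin 3 → ℝ) : ℝ := -(x 0 * y 0) + x 1 * y 1 + x 2 * y 2

/-- Lorentzian cross product. -/
def mcross (x y : Fin 3 → ℝ) : Fin 3 → ℝ :=
  ![x 1 * y 2 - x 2 * y 1, x 0 * y 2 - x 2 * y 0, x 1 * y 0 - x 0 * y 1]

/-- If sin θ - Rκσ cos θ = 0 (R constant), the striction curve of the Mannheim
offset of type M₊² of a timelike ruled surface of type M₊¹ has tangent
parallel to the ruling q* = cos θ · q + sin θ · h, so the offset is developable. -/
theorem mannheim_offset_developable_M1plus (q h a c : ℝ → Fin 3 → ℝ)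
    (κ σ θ : ℝ → ℝ) (R : ℝ)
    (hq : Differentiable ℝ q) (hh : Differentiable ℝ h) (ha : Differentiable ℝ a)
    (hc : Differentiable ℝ c)
    (hqq : ∀ s, mdot (q s) (q s) = 1)
    (hhh : ∀ s, mdot (h s) (h s) = -1)
    (haa : ∀ s, mdot (a s) (a s) = 1)
    (hqh : ∀ s, mdot (q s) (h s) = 0)
    (hqa : ∀ s, mdot (q s) (a s) = 0)
    (hha : ∀ s, mdot (h s) (a s) = 0)
    (fq : ∀ s, deriv q s = σ s • h s)
    (fh : ∀ s, deriv h s = σ s • q s + (σ s * κ s) • a s)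
    (fa : ∀ s, deriv a s = (σ s * κ s) • h s)
    (fc : ∀ s, deriv c s = q s)
    (hcos : ∀ s, Real.cos (θ s) ≠ 0)
    (hman : ∀ s, Real.sin (θ s) - R * κ s * σ s * Real.cos (θ s) = 0) :
    ∀ s, deriv (fun t => c t + R • a t) s
      = (1 / Real.cos (θ s)) • (Real.cos (θ s) • q s + Real.sin (θ s) • h s) := by
  intro s
  have hd : deriv (fun t => c t + R • a t) s = deriv c s + R • deriv a s := by
    rw [deriv_fun_add (g := fun t => R • a t) (hc s) ((ha s).const_smul R)]
    congr 1
    rw [deriv_fun_const_smul _ (ha s)]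
  rw [hd, fc, fa, smul_smul, smul_add, smul_smul, smul_smul]
  have h1 : (1 / Real.cos (θ s)) * Real.cos (θ s) = 1 := by
    field_simp [hcos s]
  have h2 : R * (σ s * κ s) = (1 / Real.cos (θ s)) * Real.sin (θ s) := by
    have := hman s
    field_simp [eq_div_iff (hcos s)]
    rw [eq_div_iff (hcos s)]
    nlinarith [this]
  rw [h1, h2, one_smul]
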